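/- Let h ≠ 0 and f(s) = a₁ s + a₀ with a₁ = 1 or a₁ = -1. Then for the helicoidal surface X(s,t) = (s cos t, s sin t, ht + f(s)) in Minkowski space E₁³ (with metric dx² + dy² - dz²), the first fundamental form satisfies EG - F² = -h² (so the surface is timelike), and the mean curvature satisfies H² = 1/h². -/

import Mathlib

noncomputable section

/-- Lorentzian inner product on Minkowski 3-space. -/
def mink (u v : ℝ × ℝ × ℝ) : ℝ := u.1 * v.1 + u.2.1 * v.2.1 - u.2.2 * v.2.2

/-- Determinant of the 3×3 matrix with columns `u,v,w`. -/
def det3 (u v w : ℝ × ℝ × ℝ) : ℝ :=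
  u.1 * (v.2.1 * w.2.2 - v.2.2 * w.2.1)
    - u.2.1 * (v.1 * w.2.2 - v.2.2 * w.1)
    + u.2.2 * (v.1 * w.2.1 - v.2.1 * w.1)

/-- Partial derivative with respect to the first parameter. -/
def pd1 (X : ℝ → ℝ → ℝ × ℝ × ℝ) : ℝ → ℝ → ℝ × ℝ × ℝ := fun s t => deriv (fun u => X u t) s

/-- Partial derivative with respect to the second parameter. -/
def pd2 (X : ℝ → ℝ → ℝ × ℝ × ℝ) : ℝ → ℝ → ℝ × ℝ × ℝ := fun s t => deriv (fun u => X s u) t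

def Ecoef (X : ℝ → ℝ → ℝ × ℝ × ℝ) (s t : ℝ) : ℝ := mink (pd1 X s t) (pd1 X s t)
def Fcoef (X : ℝ → ℝ → ℝ × ℝ × ℝ) (s t : ℝ) : ℝ := mink (pd1 X s t) (pd2 X s t)
def Gcoef (X : ℝ → ℝ → ℝ × ℝ × ℝ) (s t : ℝ) : ℝ := mink (pd2 X s t) (pd2 X s t)

/-- `W = EG - F²`. -/
def Wform (X : ℝ → ℝ → ℝ × ℝ × ℝ) (s t : ℝ) : ℝ :=
  Ecoef X s t * Gcoef X s t - Fcoef X s t ^ 2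

/-- Numerator `H₁ = G·det(Xs,Xt,Xss) - 2F·det(Xs,Xt,Xst) + E·det(Xs,Xt,Xtt)`. -/
def H1 (X : ℝ → ℝ → ℝ × ℝ × ℝ) (s t : ℝ) : ℝ :=
  Gcoef X s t * det3 (pd1 X s t) (pd2 X s t) (pd1 (pd1 X) s t)
    - 2 * Fcoef X s t * det3 (pd1 X s t) (pd2 X s t) (pd2 (pd1 X) s t)
    + Ecoef X s t * det3 (pd1 X s t) (pd2 X s t) (pd2 (pd2 X) s t)

/-- `K₁ = det(Xs,Xt,Xss)·det(Xs,Xt,Xtt) - det(Xs,Xt,Xst)²`. -/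
def K1 (X : ℝ → ℝ → ℝ × ℝ × ℝ) (s t : ℝ) : ℝ :=
  det3 (pd1 X s t) (pd2 X s t) (pd1 (pd1 X) s t)
      * det3 (pd1 X s t) (pd2 X s t) (pd2 (pd2 X) s t)
    - det3 (pd1 X s t) (pd2 X s t) (pd2 (pd1 X) s t) ^ 2

/-- Mean curvature of a timelike surface (`ε = 1`, `W < 0`). -/
def Hmean (X : ℝ → ℝ → ℝ × ℝ × ℝ) (s t : ℝ) : ℝ :=
  -(1 / 2) * H1 X s t / (-(Wform X s t)) ^ ((3 : ℝ) / 2)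

/-- Gauss curvature `K = -K₁/W²`. -/
def Kcurv (X : ℝ → ℝ → ℝ × ℝ × ℝ) (s t : ℝ) : ℝ :=
  -(K1 X s t) / (Wform X s t) ^ 2

section aux
variable (h a₀ a₁ : ℝ)

private lemma hd1 (s t : ℝ) :
    HasDerivAt (fun u : ℝ => (u * Real.cos t, u * Real.sin t, h * t + (a₁ * u + a₀)))
      (Real.cos t, Real.sin t, a₁) s := by
  refine HasDerivAt.prodMk ?_ (HasDerivAt.prodMk ?_ ?_)
  · simpa using (hasDerivAt_id s).mul_const (Real.cos t)
  · simpa using (hasDerivAt_id s).mul_const (Real.sin t)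
  · simpa using (((hasDerivAt_id s).const_mul a₁).add_const a₀).const_add (h * t)

private lemma hd2 (s t : ℝ) :
    HasDerivAt (fun u : ℝ => (s * Real.cos u, s * Real.sin u, h * u + (a₁ * s + a₀)))
      (-(s * Real.sin t), s * Real.cos t, h) t := by
  refine HasDerivAt.prodMk ?_ (HasDerivAt.prodMk ?_ ?_)
  · simpa [mul_comm] using (Real.hasDerivAt_cos t).const_mul s
  · simpa [mul_comm] using (Real.hasDerivAt_sin t).const_mul s
  · simpa using ((hasDerivAt_id t).const_mul h).add_const (a₁ * s + a₀)

end aux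


/-- The helicoidal surface `X(s,t) = (s cos t, s sin t, ht + a₁ s + a₀)` with `a₁ = ±1`
is timelike with `EG - F² = -h²` and satisfies `H² = 1/h²`. -/
theorem stmt_1 (h a₀ a₁ : ℝ) (hh : h ≠ 0) (ha : a₁ = 1 ∨ a₁ = -1) :
    let X : ℝ → ℝ → ℝ × ℝ × ℝ :=
      fun s t => (s * Real.cos t, s * Real.sin t, h * t + (a₁ * s + a₀))
    ∀ s t : ℝ, Wform X s t = -h ^ 2 ∧ (Hmean X s t) ^ 2 = 1 / h ^ 2 := by
  intro X s t
  have p1 : pd1 X = fun s t => (Real.cos t, Real.sin t, a₁) := by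
    funext s t; exact (hd1 h a₀ a₁ s t).deriv
  have p2 : pd2 X = fun s t => (-(s * Real.sin t), s * Real.cos t, h) := by
    funext s t; exact (hd2 h a₀ a₁ s t).deriv
  have p11 : pd1 (pd1 X) s t = (0, 0, 0) := by
    rw [p1]; show deriv (fun _ : ℝ => ((Real.cos t, Real.sin t, a₁) : ℝ × ℝ × ℝ)) s = _
    simp [deriv_const]; rfl
  have p12 : pd2 (pd1 X) s t = (-Real.sin t, Real.cos t, 0) := by
    rw [p1]
    exact (((Real.hasDerivAt_cos t).prodMk
      ((Real.hasDerivAt_sin t).prodMk (hasDerivAt_const t a₁)))).deriv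
  have p22 : pd2 (pd2 X) s t = (-(s * Real.cos t), -(s * Real.sin t), 0) := by
    rw [p2]
    refine HasDerivAt.deriv ?_
    refine HasDerivAt.prodMk ?_ (HasDerivAt.prodMk ?_ (hasDerivAt_const t h))
    · simpa [mul_comm] using ((Real.hasDerivAt_sin t).const_mul s).fun_neg
    · simpa [mul_comm, neg_mul, mul_neg] using (Real.hasDerivAt_cos t).const_mul s
  have q1 : pd1 X s t = (Real.cos t, Real.sin t, a₁) := by rw [p1]
  have q2 : pd2 X s t = (-(s * Real.sin t), s * Real.cos t, h) := by rw [p2]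
  have ha2 : a₁ ^ 2 = 1 := by rcases ha with h1 | h1 <;> simp [h1]
  have hE : Ecoef X s t = 0 := by
    simp [Ecoef, mink, q1]
    nlinarith [Real.sin_sq_add_cos_sq t, ha2]
  have hF : Fcoef X s t = -(a₁ * h) := by
    simp [Fcoef, mink, q1, q2]; ring
  have hG : Gcoef X s t = s ^ 2 - h ^ 2 := by
    simp [Gcoef, mink, q2]
    nlinarith [Real.sin_sq_add_cos_sq t]
  have hW : Wform X s t = -h ^ 2 := by
    simp [Wform, hE, hF, ha2]
    nlinarith [ha2]
  refine ⟨hW, ?_⟩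
  have hd : det3 (pd1 X s t) (pd2 X s t) (pd2 (pd1 X) s t) = -h := by
    simp [det3, q1, q2, p12]
    linear_combination (-h) * Real.sin_sq_add_cos_sq t
  have hH1 : H1 X s t = -(2 * a₁ * h ^ 2) := by
    rw [H1, hE, hF, hd, p11]; simp [det3]
    ring
  have hpow : ((h ^ 2) ^ ((3:ℝ)/2)) ^ 2 = h ^ 6 := by
    rw [← Real.rpow_natCast ((h ^ 2) ^ ((3:ℝ)/2)) 2, ← Real.rpow_mul (by positivity)]
    norm_num
    ring
  have : Hmean X s t = -(1/2) * (-(2 * a₁ * h ^ 2)) / (h ^ 2) ^ ((3:ℝ)/2) := by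
    rw [Hmean, hH1, hW]; norm_num
  rw [this]
  rw [div_pow, mul_pow, hpow]
  have h2 : (0:ℝ) < h ^ 2 := by positivity
  field_simp
  nlinarith [ha2, sq_nonneg h, pow_pos h2 3]
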